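/- For every base graph G and functions f, g : E(G) → F_2, the CFI-graphs CFI(G,f) and CFI(G,g) are isomorphic if and only if the sums Σ_{e} f(e) and Σ_{e} g(e) over all edges agree in F_2. -/

import Mathlib

open SimpleGraph

variable {V : Type} [Fintype V] [DecidableEq V]

open SimpleGraph Finset

variable {V : Type} [Fintype V] [DecidableEq V]
lemma CFI_sum_pairs (G : SimpleGraph V) [DecidableRel G.Adj] (y : V → V → ZMod 2)
    (hy : ∀ v u, ¬ G.Adj v u → y v u = 0) :
    ∑ v, ∑ u, y v u =
      ∑ e ∈ G.edgeFinset, Sym2.lift ⟨fun a b => y a b + y b a, fun a b => add_comm _ _⟩ e := by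
  have h1 : ∑ d : G.Dart, y d.fst d.snd = ∑ v, ∑ u, y v u := by
    rw [← Finset.sum_fiberwise_of_maps_to (g := fun d : G.Dart => d.fst) (t := Finset.univ) (fun d _ => mem_univ _)]
    refine Finset.sum_congr rfl fun v _ => ?_
    have : (Finset.univ.filter fun d : G.Dart => d.fst = v) = univ.image (G.dartOfNeighborSet v) :=
      G.dart_fst_fiber v
    rw [this, Finset.sum_image (f := fun d : G.Dart => y d.fst d.snd)
      (fun a _ b _ h => G.dartOfNeighborSet_injective v h)]
    rw [← Finset.sum_subset (Finset.subset_univ (G.neighborFinset v))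
      (f := fun u => y v u) (fun u _ hu => hy v u (by simpa using hu))]
    simp only [dartOfNeighborSet]
    rw [Finset.sum_set_coe (f := fun u => y v u), neighborFinset_def]
  have h2 : ∑ d : G.Dart, y d.fst d.snd =
      ∑ e ∈ G.edgeFinset, Sym2.lift ⟨fun a b => y a b + y b a, fun a b => add_comm _ _⟩ e := by
    rw [← Finset.sum_fiberwise_of_maps_to (g := fun d : G.Dart => d.edge) (t := G.edgeFinset)
      (fun d _ => by rw [mem_edgeFinset]; exact d.edge_mem)]
    refine Finset.sum_congr rfl fun e he => ?_
    rw [mem_edgeFinset] at he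
    induction e with
    | _ v w =>
      let d : G.Dart := ⟨(v, w), he⟩
      have hfib : (Finset.univ.filter fun d' : G.Dart => d'.edge = s(v, w)) = {d, d.symm} := by
        have := d.edge_fiber
        exact this
      rw [hfib, Finset.sum_pair d.symm_ne.symm]
      simp [d, Dart.symm]
  rw [← h1, h2]
lemma zmod2_add_self (x : ZMod 2) : x + x = 0 := by revert x; decide

lemma zmod2_cases (x : ZMod 2) : x = 0 ∨ x = 1 := by revert x; decide

lemma zmod2_key1 : ∀ i j y1 y2 fe ge : ZMod 2,
    i + y1 + (j + y2) = ge → y1 + y2 = fe + ge → i + j = fe := by decide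

lemma zmod2_ne_iff : ∀ a b : ZMod 2, a ≠ b → a = 1 + b := by decide

lemma zmod2_key3 : ∀ y1 y2 fe ge : ZMod 2,
    0 + y1 + (fe + y2) = ge → y1 + y2 = fe + ge := by decide

lemma zmod2_key4 : ∀ y1 y2 fe ge : ZMod 2,
    fe + y2 + (0 + y1) = ge → y1 + y2 = fe + ge := by decide

lemma zmod2_eq_of_add_eq_zero : ∀ a b : ZMod 2, a + b = 0 → a = b := by decide

lemma zmod2_key2 : ∀ i j y1 y2 fe ge : ZMod 2,
    i + j = fe → y1 + y2 = fe + ge → i + y1 + (j + y2) = ge := by decide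

def CFIpairFun (a b : V) : V → V → ZMod 2 := fun v u =>
  if (v = a ∧ u = b) ∨ (v = b ∧ u = a) then 1 else 0

lemma CFIpairFun_symm (a b v u : V) : CFIpairFun a b v u = CFIpairFun a b u v := by
  unfold CFIpairFun
  by_cases h1 : v = a <;> by_cases h2 : v = b <;> by_cases h3 : u = a <;> by_cases h4 : u = b <;>
    simp_all

lemma CFIpairFun_rowsum (a b : V) (hab : a ≠ b) (v : V) :
    ∑ u, CFIpairFun a b v u = (if v = a then 1 else 0) + (if v = b then 1 else 0) := by
  have : ∀ u, CFIpairFun a b v u =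
      (if v = a then (if u = b then (1 : ZMod 2) else 0) else 0)
      + (if v = b then (if u = a then (1 : ZMod 2) else 0) else 0) := by
    intro u
    unfold CFIpairFun
    by_cases h1 : v = a <;> by_cases h2 : v = b <;> by_cases h3 : u = a <;> by_cases h4 : u = b <;>
      simp_all
  simp only [this, Finset.sum_add_distrib]
  by_cases h1 : v = a <;> by_cases h2 : v = b <;> simp_all [Finset.sum_ite_eq']

def CFIwalkFun {G : SimpleGraph V} : ∀ {a c : V}, G.Walk a c → (V → V → ZMod 2)
  | _, _, Walk.nil => 0
  | a, _, Walk.cons (v := b) _h w => CFIpairFun a b + CFIwalkFun w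

lemma CFIwalkFun_symm {G : SimpleGraph V} {a c : V} (w : G.Walk a c) (v u : V) :
    CFIwalkFun w v u = CFIwalkFun w u v := by
  induction w with
  | nil => rfl
  | cons h w ih => simp [CFIwalkFun, CFIpairFun_symm, ih]

lemma CFIwalkFun_supp {G : SimpleGraph V} {a c : V} (w : G.Walk a c) (v u : V)
    (hvu : ¬ G.Adj v u) : CFIwalkFun w v u = 0 := by
  induction w with
  | nil => rfl
  | cons h w ih =>
    simp only [CFIwalkFun, Pi.add_apply, ih]
    rw [add_zero]
    unfold CFIpairFun
    rw [if_neg]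
    rintro (⟨rfl, rfl⟩ | ⟨rfl, rfl⟩)
    · exact hvu h
    · exact hvu h.symm

lemma CFIwalkFun_rowsum {G : SimpleGraph V} {a c : V} (w : G.Walk a c) (v : V) :
    ∑ u, CFIwalkFun w v u = (if v = a then 1 else 0) + (if v = c then 1 else 0) := by
  induction w with
  | nil => simp [CFIwalkFun]; by_cases h : v = a <;> simp [h, zmod2_add_self]
  | @cons a b c h w ih =>
    simp only [CFIwalkFun, Pi.add_apply, Finset.sum_add_distrib, ih,
      CFIpairFun_rowsum a b (G.ne_of_adj h) v]
    by_cases h1 : v = a <;> by_cases h2 : v = b <;> by_cases h3 : v = c <;>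
      simp_all [zmod2_add_self] <;> ring

lemma CFI_exists_split (G : SimpleGraph V) [DecidableRel G.Adj] (hconn : G.Connected)
    (d : Sym2 V → ZMod 2) (hd : ∑ e ∈ G.edgeFinset, d e = 0) :
    ∃ y : V → V → ZMod 2, (∀ v u, ¬ G.Adj v u → y v u = 0) ∧ (∀ v, ∑ u, y v u = 0) ∧
      (∀ v u, G.Adj v u → y v u + y u v = d s(v, u)) := by
  obtain ⟨r⟩ := hconn.nonempty
  let o : V ≃ Fin (Fintype.card V) := Fintype.equivFin V
  set y0 : V → V → ZMod 2 := fun v u => if G.Adj v u ∧ o v < o u then d s(v, u) else 0 with hy0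
  have hy0supp : ∀ v u, ¬ G.Adj v u → y0 v u = 0 := by
    intro v u h
    simp [hy0, h]
  have hsplit : ∀ v u, G.Adj v u → y0 v u + y0 u v = d s(v, u) := by
    intro v u h
    have hne : o v ≠ o u := fun he => G.ne_of_adj h (o.injective he)
    rcases lt_or_gt_of_ne hne with hlt | hlt
    · simp [hy0, h, h.symm, hlt, not_lt_of_gt hlt]
    · have : s(u, v) = s(v, u) := Sym2.eq_swap
      simp [hy0, h, h.symm, hlt, not_lt_of_gt hlt, this]
  set c : V → ZMod 2 := fun v => ∑ u, y0 v u with hc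
  have hcsum : ∑ v, c v = 0 := by
    rw [hc]
    rw [CFI_sum_pairs G y0 hy0supp]
    rw [← hd]
    refine Finset.sum_congr rfl fun e he => ?_
    rw [mem_edgeFinset] at he
    induction e with
    | _ v u => simpa using hsplit v u he
  set W : V → V → V → ZMod 2 := fun v => CFIwalkFun (Classical.choice (hconn.preconnected v r)) with hW
  set b : V → V → ZMod 2 := fun v' u' => ∑ v, c v * W v v' u' with hb
  have hbsymm : ∀ v u, b v u = b u v := by
    intro v u
    simp only [hb, hW]
    exact Finset.sum_congr rfl fun x _ => by rw [CFIwalkFun_symm]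
  have hbsupp : ∀ v u, ¬ G.Adj v u → b v u = 0 := by
    intro v u h
    simp only [hb, hW]
    refine Finset.sum_eq_zero fun x _ => ?_
    rw [CFIwalkFun_supp _ _ _ h, mul_zero]
  have hbrow : ∀ v', ∑ u, b v' u = c v' := by
    intro v'
    show ∑ u, ∑ v, c v * W v v' u = c v'
    rw [Finset.sum_comm]
    have hrow : ∀ v, ∑ u, c v * W v v' u
        = c v * ((if v' = v then 1 else 0) + (if v' = r then 1 else 0)) := by
      intro v
      rw [← Finset.mul_sum]
      congr 1
      exact CFIwalkFun_rowsum _ v'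
    simp only [hrow, mul_add]
    rw [Finset.sum_add_distrib]
    have h1 : ∑ v, c v * (if v' = v then (1 : ZMod 2) else 0) = c v' := by
      simp [mul_ite, Finset.sum_ite_eq]
    have h2 : ∑ v, c v * (if v' = r then (1 : ZMod 2) else 0) = 0 := by
      rw [← Finset.sum_mul, hcsum, zero_mul]
    rw [h1, h2, add_zero]
  refine ⟨fun v u => y0 v u + b v u, ?_, ?_, ?_⟩
  · intro v u h; show y0 v u + b v u = 0; rw [hy0supp v u h, hbsupp v u h, add_zero]
  · intro v
    show ∑ u, (y0 v u + b v u) = 0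
    rw [Finset.sum_add_distrib, hbrow v]
    have : ∑ x : V, y0 v x = c v := rfl
    rw [this]
    exact zmod2_add_self _
  · intro v u h
    show y0 v u + b v u + (y0 u v + b u v) = d s(v, u)
    have h0 : b v u + b u v = 0 := by rw [hbsymm v u]; exact zmod2_add_self _
    calc y0 v u + b v u + (y0 u v + b u v) = (y0 v u + y0 u v) + (b v u + b u v) := by ring
    _ = d s(v, u) := by rw [hsplit v u h, h0, add_zero]


/-- Vertices of the CFI-graph over base graph `G`: inner vertices `(v, x)` with
`x : V → ZMod 2` supported on the neighbors of `v` and of even weight, and outer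
vertices `(v, u, i)` for edges `vu` of `G` and `i ∈ F₂`. -/
def CFIVert (G : SimpleGraph V) : Type :=
  {p : V × (V → ZMod 2) // (∀ u : V, ¬ G.Adj p.1 u → p.2 u = 0) ∧ ∑ u : V, p.2 u = 0} ⊕
  {p : V × V × ZMod 2 // G.Adj p.1 p.2.1}

/-- The CFI-graph `CFI(G, f)`: inner vertex `(v, x)` is adjacent to outer vertex
`(v, u, i)` iff `x u = i`, and outer vertices `(v, u, i)` and `(u, v, j)` are adjacent
iff `i + j = f {u, v}`. -/
def CFIGraph (G : SimpleGraph V) (f : Sym2 V → ZMod 2) : SimpleGraph (CFIVert G) :=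
  SimpleGraph.fromRel (fun a b =>
    match a, b with
    | Sum.inl x, Sum.inr p => x.val.1 = p.val.1 ∧ x.val.2 p.val.2.1 = p.val.2.2
    | Sum.inr p, Sum.inr q =>
        q.val.1 = p.val.2.1 ∧ q.val.2.1 = p.val.1 ∧
          p.val.2.2 + q.val.2.2 = f s(p.val.1, q.val.1)
    | _, _ => False)

/-- The vertex-coloring of the CFI-graph: the inner vertices of the gadget of `v` form one
color class, and each outer pair `{(v, u, 0), (v, u, 1)}` forms one color class. -/
def CFIColor (G : SimpleGraph V) : CFIVert G → V ⊕ (V × V)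
  | Sum.inl x => Sum.inl x.val.1
  | Sum.inr p => Sum.inr (p.val.1, p.val.2.1)

variable (G : SimpleGraph V) [DecidableRel G.Adj]

def CFItwist (y : V → V → ZMod 2)
    (h1 : ∀ v u, ¬ G.Adj v u → y v u = 0) (h2 : ∀ v, ∑ u, y v u = 0) :
    CFIVert G → CFIVert G
  | .inl ⟨(v, x), hx⟩ => .inl ⟨(v, fun u => x u + y v u),
      ⟨fun u hu => by
        have hxu : x u = 0 := hx.1 u hu
        have hyu : y v u = 0 := h1 v u hu
        show x u + y v u = 0
        rw [hxu, hyu, add_zero],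
       by
        have hxs : ∑ u, x u = 0 := hx.2
        show ∑ u, (x u + y v u) = 0
        rw [Finset.sum_add_distrib, hxs, h2 v, add_zero]⟩⟩
  | .inr ⟨(v, u, i), h⟩ => .inr ⟨(v, u, i + y v u), h⟩

lemma CFItwist_invol (y : V → V → ZMod 2)
    (h1 : ∀ v u, ¬ G.Adj v u → y v u = 0) (h2 : ∀ v, ∑ u, y v u = 0) (a : CFIVert G) :
    CFItwist G y h1 h2 (CFItwist G y h1 h2 a) = a := by
  rcases a with ⟨⟨v, x⟩, hx⟩ | ⟨⟨v, u, i⟩, h⟩ <;>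
    simp [CFItwist, add_assoc, zmod2_add_self, add_zero] <;> rfl

lemma CFItwist_color (y : V → V → ZMod 2)
    (h1 : ∀ v u, ¬ G.Adj v u → y v u = 0) (h2 : ∀ v, ∑ u, y v u = 0) (a : CFIVert G) :
    CFIColor G (CFItwist G y h1 h2 a) = CFIColor G a := by
  rcases a with ⟨⟨v, x⟩, hx⟩ | ⟨⟨v, u, i⟩, h⟩ <;> rfl

lemma CFItwist_adj (f g : Sym2 V → ZMod 2) (y : V → V → ZMod 2)
    (h1 : ∀ v u, ¬ G.Adj v u → y v u = 0) (h2 : ∀ v, ∑ u, y v u = 0)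
    (h3 : ∀ v u, G.Adj v u → y v u + y u v = f s(v, u) + g s(v, u)) (a b : CFIVert G) :
    (CFIGraph G g).Adj (CFItwist G y h1 h2 a) (CFItwist G y h1 h2 b) ↔
      (CFIGraph G f).Adj a b := by
  have hinj : ∀ a b : CFIVert G, CFItwist G y h1 h2 a = CFItwist G y h1 h2 b → a = b := by
    intro a b hab
    rw [← CFItwist_invol G y h1 h2 a, hab, CFItwist_invol]
  have hne : CFItwist G y h1 h2 a ≠ CFItwist G y h1 h2 b ↔ a ≠ b :=
    not_congr ⟨hinj a b, fun h => h ▸ rfl⟩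
  rw [CFIGraph, CFIGraph, fromRel_adj, fromRel_adj]
  refine and_congr hne (or_congr ?_ ?_) <;>
    rcases a with ⟨⟨va, xa⟩, hxa⟩ | ⟨⟨va, ua, i⟩, ha⟩ <;>
    rcases b with ⟨⟨vb, xb⟩, hxb⟩ | ⟨⟨vb, ub, j⟩, hb⟩ <;>
    simp only [CFItwist] <;> try rfl
  · -- inl, inr forward rel
    constructor
    · rintro ⟨rfl, h⟩
      exact ⟨rfl, add_right_cancel h⟩
    · rintro ⟨rfl, h⟩
      exact ⟨rfl, by rw [h]⟩
  · -- inr, inr forward rel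
    constructor
    · rintro ⟨rfl, rfl, h⟩
      refine ⟨rfl, rfl, ?_⟩
      exact zmod2_key1 _ _ _ _ _ _ h (h3 ub vb ha)
    · rintro ⟨rfl, rfl, h⟩
      refine ⟨rfl, rfl, ?_⟩
      exact zmod2_key2 _ _ _ _ _ _ h (h3 ub vb ha)
  · -- inr, inl  (swapped rel : rel b a with b inl)
    constructor
    · rintro ⟨rfl, h⟩
      exact ⟨rfl, add_right_cancel h⟩
    · rintro ⟨rfl, h⟩
      exact ⟨rfl, by rw [h]⟩
  · -- inr, inr swapped
    constructor
    · rintro ⟨rfl, rfl, h⟩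
      refine ⟨rfl, rfl, ?_⟩
      exact zmod2_key1 _ _ _ _ _ _ h (h3 ua va hb)
    · rintro ⟨rfl, rfl, h⟩
      refine ⟨rfl, rfl, ?_⟩
      exact zmod2_key2 _ _ _ _ _ _ h (h3 ua va hb)

/-- For a connected base graph `G`, the colored CFI-graphs `CFI(G, f)` and `CFI(G, g)` are
isomorphic if and only if `Σ_e f e = Σ_e g e` in `F₂`. -/
theorem stmt9 (G : SimpleGraph V) [DecidableRel G.Adj] (hconn : G.Connected)
    (f g : Sym2 V → ZMod 2) :
    (∃ φ : CFIGraph G f ≃g CFIGraph G g, ∀ a : CFIVert G, CFIColor G (φ a) = CFIColor G a) ↔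
      ∑ e ∈ G.edgeFinset, f e = ∑ e ∈ G.edgeFinset, g e := by
  constructor
  · rintro ⟨φ, hcol⟩
    classical
    -- φ sends outer vertices to outer vertices over the same pair
    have houter : ∀ (p : {p : V × V × ZMod 2 // G.Adj p.1 p.2.1}),
        ∃ i' : ZMod 2, φ (Sum.inr p) = Sum.inr ⟨(p.1.1, p.1.2.1, i'), p.2⟩ := by
      intro p
      have hc := hcol (Sum.inr p)
      rcases hq : φ (Sum.inr p) with q | q
      · rw [hq] at hc; exact absurd hc (by simp [CFIColor])
      · rw [hq] at hc
        obtain ⟨⟨qv, qu, qi⟩, hqadj⟩ := q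
        simp only [CFIColor, Sum.inr.injEq, Prod.mk.injEq] at hc
        obtain ⟨h1, h2⟩ := hc
        subst h1; subst h2
        exact ⟨qi, rfl⟩
    choose Y hY using houter
    set y : V → V → ZMod 2 :=
      fun v u => if h : G.Adj v u then Y ⟨(v, u, 0), h⟩ else 0 with hydef
    have hyeq : ∀ v u (h : G.Adj v u), y v u = Y ⟨(v, u, 0), h⟩ := by
      intro v u h; rw [hydef]; exact dif_pos h
    have hsupp : ∀ v u, ¬ G.Adj v u → y v u = 0 := by
      intro v u h; rw [hydef]; exact dif_neg h
    have hinj : Function.Injective φ := φ.toEquiv.injective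
    have key : ∀ v u (h : G.Adj v u) (i : ZMod 2),
        φ (Sum.inr ⟨(v, u, i), h⟩) = Sum.inr ⟨(v, u, i + y v u), h⟩ := by
      intro v u h i
      rcases zmod2_cases i with rfl | rfl
      · rw [hY ⟨(v, u, 0), h⟩, hyeq v u h, zero_add]
      · rw [hY ⟨(v, u, 1), h⟩]
        have hne : Y ⟨(v, u, 1), h⟩ ≠ y v u := by
          intro hEq
          have heq2 : φ (Sum.inr ⟨(v, u, 1), h⟩) = φ (Sum.inr ⟨(v, u, 0), h⟩) := by
            rw [hY ⟨(v, u, 1), h⟩, hY ⟨(v, u, 0), h⟩, hEq, hyeq v u h]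
          have h2 := hinj heq2
          injection h2 with h3
          have h4 : (1 : ZMod 2) = 0 := congrArg (fun q => q.val.2.2) h3
          exact absurd h4 (by decide)
        rw [zmod2_ne_iff _ _ hne]
    -- edge relation
    have hedge : ∀ v u (h : G.Adj v u), y v u + y u v = f s(v, u) + g s(v, u) := by
      intro v u h
      have hadj : (CFIGraph G f).Adj (Sum.inr ⟨(v, u, 0), h⟩)
          (Sum.inr ⟨(u, v, f s(v, u)), h.symm⟩) := by
        refine (fromRel_adj _ _ _).mpr ?_
        constructor
        · intro hc
          injection hc with hc2
          exact G.ne_of_adj h (congrArg (fun q => q.val.1) hc2)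
        · exact Or.inl ⟨rfl, rfl, by rw [zero_add]⟩
      have hadj2 := φ.map_adj_iff.mpr hadj
      rw [key v u h 0, key u v h.symm (f s(v, u))] at hadj2
      replace hadj2 := (fromRel_adj _ _ _).mp hadj2
      rcases hadj2.2 with ⟨_, _, hrel⟩ | ⟨_, _, hrel⟩
      · exact zmod2_key3 _ _ _ _ hrel
      · rw [show s(u, v) = s(v, u) from Sym2.eq_swap] at hrel
        exact zmod2_key4 _ _ _ _ hrel
    -- row sums
    have hrow : ∀ v, ∑ u, y v u = 0 := by
      intro v
      set X : CFIVert G := Sum.inl ⟨(v, fun _ => 0), ⟨fun _ _ => rfl, by simp⟩⟩ with hXdef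
      have hXc := hcol X
      rcases hX : φ X with q | q
      · obtain ⟨⟨w, x'⟩, hx'⟩ := q
        rw [hX] at hXc
        have hw : w = v := by simpa [CFIColor, hXdef] using hXc
        subst hw
        have hx'u : ∀ u, x' u = y w u := by
          intro u
          by_cases h : G.Adj w u
          · have hadjX : (CFIGraph G f).Adj X (Sum.inr ⟨(w, u, 0), h⟩) := by
              refine (fromRel_adj _ _ _).mpr ?_
              exact ⟨fun hc => (by rw [hXdef] at hc; cases hc), Or.inl ⟨rfl, rfl⟩⟩
            have hadj2 := φ.map_adj_iff.mpr hadjX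
            rw [hX, key w u h 0] at hadj2
            replace hadj2 := (fromRel_adj _ _ _).mp hadj2
            rcases hadj2.2 with ⟨_, hrel⟩ | hfalse
            · have hrel' : x' u = 0 + y w u := hrel
              rw [hrel', zero_add]
            · exact hfalse.elim
          · have hx0 : x' u = 0 := hx'.1 u h
            rw [hx0, hsupp w u h]
        have hsum : ∑ u, x' u = 0 := hx'.2
        rw [← hsum]
        exact Finset.sum_congr rfl fun u _ => (hx'u u).symm
      · rw [hX] at hXc
        exact absurd hXc (by simp [CFIColor, hXdef])
    -- conclude
    have h0 : ∑ v, ∑ u, y v u = 0 := Finset.sum_eq_zero fun v _ => hrow v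
    rw [CFI_sum_pairs G y hsupp] at h0
    have h1 : ∑ e ∈ G.edgeFinset, (f e + g e) = 0 := by
      rw [← h0]
      refine Finset.sum_congr rfl fun e he => ?_
      rw [mem_edgeFinset] at he
      induction e with
      | _ v u => simpa using (hedge v u he).symm
    rw [Finset.sum_add_distrib] at h1
    exact zmod2_eq_of_add_eq_zero _ _ h1
  · intro hsum
    have hd : ∑ e ∈ G.edgeFinset, (f e + g e) = 0 := by
      rw [Finset.sum_add_distrib, hsum]
      exact zmod2_add_self _
    obtain ⟨y, h1, h2, h3⟩ := CFI_exists_split G hconn (fun e => f e + g e) hd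
    refine ⟨⟨⟨CFItwist G y h1 h2, CFItwist G y h1 h2,
      CFItwist_invol G y h1 h2, CFItwist_invol G y h1 h2⟩,
      fun {a b} => CFItwist_adj G f g y h1 h2 h3 a b⟩,
      fun a => CFItwist_color G y h1 h2 a⟩
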